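/- Let P be a polynomial with real non-negative coefficients. Then P is geometrically convex on (0,∞); that is, P(a^λ b^(1−λ)) ≤ P(a)^λ · P(b)^(1−λ) for all a, b > 0 and all λ ∈ [0,1]. -/

import Mathlib

/-- Every polynomial with non-negative real coefficients is geometrically convex
on `(0,∞)`. -/
theorem stmt_6 (P : Polynomial ℝ) (hP : ∀ i, 0 ≤ P.coeff i) :
    ∀ a b : ℝ, 0 < a → 0 < b → ∀ l ∈ Set.Icc (0 : ℝ) 1,
      P.eval (a ^ l * b ^ (1 - l)) ≤ P.eval a ^ l * P.eval b ^ (1 - l) := by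
  intro a b ha hb l hl
  obtain ⟨hl0, hl1⟩ := hl
  rcases hl0.eq_or_lt with rfl | hl0
  · simp
  rcases hl1.eq_or_lt with rfl | hl1
  · simp
  have h1l : 0 < 1 - l := by linarith
  have hpq : Real.HolderConjugate (1 / l) (1 / (1 - l)) := by
    rw [Real.holderConjugate_iff]
    constructor
    · rw [lt_div_iff₀ hl0]; linarith
    · field_simp; ring
  set n := P.natDegree with hn
  have term : ∀ (c : ℝ), 0 ≤ c → ∀ i : ℕ,
      c * (a ^ l * b ^ (1 - l)) ^ i = (c * a ^ i) ^ l * (c * b ^ i) ^ (1 - l) := by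
    intro c hc i
    rw [Real.mul_rpow hc (pow_nonneg ha.le i), Real.mul_rpow hc (pow_nonneg hb.le i)]
    have hcc : c ^ l * c ^ (1 - l) = c := by
      rcases hc.eq_or_lt with rfl | hc
      · rw [Real.zero_rpow hl0.ne', zero_mul]
      · rw [← Real.rpow_add hc]; simp
    rw [mul_mul_mul_comm, hcc]
    congr 1
    rw [mul_pow, ← Real.rpow_natCast (a ^ l), ← Real.rpow_natCast (b ^ (1 - l)),
      ← Real.rpow_mul ha.le, ← Real.rpow_mul hb.le, mul_comm l, mul_comm (1 - l),
      Real.rpow_mul ha.le, Real.rpow_mul hb.le, Real.rpow_natCast, Real.rpow_natCast]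
  have H := Real.inner_le_Lp_mul_Lq_of_nonneg (Finset.range (n + 1)) hpq
    (f := fun i => (P.coeff i * a ^ i) ^ l) (g := fun i => (P.coeff i * b ^ i) ^ (1 - l))
    (fun i _ => Real.rpow_nonneg (mul_nonneg (hP i) (pow_nonneg ha.le i)) _)
    (fun i _ => Real.rpow_nonneg (mul_nonneg (hP i) (pow_nonneg hb.le i)) _)
  have hfa : ∀ i : ℕ, ((P.coeff i * a ^ i) ^ l) ^ (1 / l) = P.coeff i * a ^ i := by
    intro i
    rw [← Real.rpow_mul (mul_nonneg (hP i) (pow_nonneg ha.le i)),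
      mul_one_div, div_self hl0.ne', Real.rpow_one]
  have hfb : ∀ i : ℕ, ((P.coeff i * b ^ i) ^ (1 - l)) ^ (1 / (1 - l)) = P.coeff i * b ^ i := by
    intro i
    rw [← Real.rpow_mul (mul_nonneg (hP i) (pow_nonneg hb.le i)),
      mul_one_div, div_self h1l.ne', Real.rpow_one]
  simp only [hfa, hfb, one_div_one_div] at H
  calc P.eval (a ^ l * b ^ (1 - l))
      = ∑ i ∈ Finset.range (n + 1),
        (P.coeff i * a ^ i) ^ l * (P.coeff i * b ^ i) ^ (1 - l) := by
        rw [Polynomial.eval_eq_sum_range]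
        exact Finset.sum_congr rfl fun i _ => term _ (hP i) i
    _ ≤ (∑ i ∈ Finset.range (n + 1), P.coeff i * a ^ i) ^ l *
        (∑ i ∈ Finset.range (n + 1), P.coeff i * b ^ i) ^ (1 - l) := H
    _ = P.eval a ^ l * P.eval b ^ (1 - l) := by
        rw [← Polynomial.eval_eq_sum_range, ← Polynomial.eval_eq_sum_range]
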